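/- Every generalized numerical semigroup S ⊆ ℕ₀^d has at most one corner element; that is, the corner of S is unique. -/
import Mathlib


open scoped BigOperators

/-- A generalized numerical semigroup (GNS): a submonoid of ℕ₀^d with finite complement. -/
def IsGNS {d : ℕ} (S : Set (Fin d → ℕ)) : Prop :=
  0 ∈ S ∧ (∀ x ∈ S, ∀ y ∈ S, x + y ∈ S) ∧ Sᶜ.Finite

/-- `c` is a corner of `S`: (1) any tuple whose i-th coordinate is ≥ c i lies in S;
(2) for each i with c i ≥ 1 there is a tuple with i-th coordinate c i − 1 outside S. -/
def IsCornerOf {d : ℕ} (S : Set (Fin d → ℕ)) (c : Fin d → ℕ) : Prop :=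
  c ∈ S ∧
  (∀ i : Fin d, ∀ x : Fin d → ℕ, c i ≤ x i → x ∈ S) ∧
  (∀ i : Fin d, c i = 0 ∨ ∃ x : Fin d → ℕ, x i + 1 = c i ∧ x ∉ S)

theorem corner_unique {d : ℕ} (S : Set (Fin d → ℕ)) (hS : IsGNS S)
    (c c' : Fin d → ℕ) (hc : IsCornerOf S c) (hc' : IsCornerOf S c') : c = c' := by
  funext i
  by_contra hne
  rcases Nat.lt_or_ge (c i) (c' i) with h | h
  · rcases hc'.2.2 i with h0 | ⟨x, hx1, hxS⟩
    · omega
    · exact hxS (hc.2.1 i x (by omega))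
  · rcases Nat.lt_or_ge (c' i) (c i) with h2 | h2
    · rcases hc.2.2 i with h0 | ⟨x, hx1, hxS⟩
      · omega
      · exact hxS (hc'.2.1 i x (by omega))
    · exact hne (le_antisymm h2 h)
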